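/- Let K be a field of characteristic 0 and g ≥ 2 even. If f ∈ K[x] is a squarefree polynomial of degree 2g+1 satisfying f(−x) = −f(x) and x^{2g+2} f(1/x) = −f(x), then f(x) = c·x(x⁴−1)·h(x) where c ∈ K and h is a self-reciprocal even polynomial of degree 2g−4, i.e. h(x) = x^{2g−4} + 1 + Σ_{j=1}^{g/2−1} a_j (x^{2g−4−2j} + x^{2j}) up to scaling. -/

import Mathlib

open scoped Polynomial
open Polynomial Finset

lemma my_coeff_comp_neg_X {K : Type*} [CommRing K] (p : K[X]) (n : ℕ) :
    (p.comp (-X)).coeff n = (-1)^n * p.coeff n := by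
  induction p using Polynomial.induction_on' with
  | add p q hp hq => simp [add_comp, hp, hq, mul_add]
  | monomial k a =>
      simp only [monomial_comp, coeff_monomial]
      rw [neg_pow]
      have : (C a * ((-1:K[X])^k * X^k)) = C ((-1)^k * a) * X ^ k := by
        rw [show ((-1:K[X])^k) = C ((-1)^k) by rw [map_pow, map_neg, map_one]]
        rw [← mul_assoc, ← C_mul]; ring
      rw [this, coeff_C_mul, coeff_X_pow]
      rcases eq_or_ne k n with rfl | hkn
      · simp
      · simp [hkn, Ne.symm hkn]

lemma my_eval_reflect {K : Type*} [Field K] (p : K[X]) (N : ℕ) (hN : p.natDegree ≤ N)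
    (t : K) (ht : t ≠ 0) : (reflect N p).eval t = t ^ N * p.eval t⁻¹ := by
  have : Invertible t⁻¹ := invertibleOfNonzero (inv_ne_zero ht)
  have h := Polynomial.eval₂_reflect_mul_pow (RingHom.id K) t⁻¹ N p hN
  have h2 : (⅟ (t⁻¹) : K) = t := by rw [invOf_eq_inv, inv_inv]
  rw [h2] at h
  simp only [eval₂_eq_eval_map, Polynomial.map_id] at h
  field_simp at h ⊢
  have hx : t ^ N * t⁻¹ ^ N = 1 := by rw [← mul_pow, mul_inv_cancel₀ ht, one_pow]
  linear_combination t ^ N * h - eval t (reflect N p) * hx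

lemma my_sum_range_two_mul {M : Type*} [AddCommMonoid M] (n : ℕ) (F : ℕ → M) :
    ∑ k ∈ range (2*n), F k = ∑ j ∈ range n, (F (2*j) + F (2*j+1)) := by
  induction n with
  | zero => simp
  | succ n ih =>
      rw [show 2*(n+1) = 2*n+1+1 by ring, sum_range_succ, sum_range_succ, ih,
        sum_range_succ, add_assoc]

/-- Let `K` be a field of characteristic `0` and `g ≥ 2` even.  If `f ∈ K[x]` is a
squarefree polynomial of degree `2g+1` satisfying `f(−x) = −f(x)` and
`x^{2g+2} f(1/x) = −f(x)`, then
`f(x) = c·x(x⁴−1)·(x^{2g−4} + 1 + Σ_{j=1}^{g/2−1} a_j (x^{2g−4−2j} + x^{2j}))`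
for some `c ∈ K` and coefficients `a_j ∈ K`. -/
theorem squarefree_odd_selfreciprocal_factorization
    (K : Type*) [Field K] [CharZero K] (g : ℕ) (hg2 : 2 ≤ g) (hge : Even g)
    (f : K[X]) (hsf : Squarefree f) (hdeg : f.natDegree = 2 * g + 1)
    (hodd : ∀ t : K, f.eval (-t) = -f.eval t)
    (hrec : ∀ t : K, t ≠ 0 → t ^ (2 * g + 2) * f.eval t⁻¹ = -f.eval t) :
    ∃ (c : K) (a : ℕ → K),
      f = C c * (X * (X ^ 4 - 1) *
        (X ^ (2 * g - 4) + 1 +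
          ∑ j ∈ Finset.Icc 1 (g / 2 - 1),
            C (a j) * (X ^ (2 * g - 4 - 2 * j) + X ^ (2 * j)))) := by
  classical
  obtain ⟨gh, hgh⟩ := hge
  have hf0 : f ≠ 0 := fun h => by simp [h] at hdeg
  -- f is odd
  have P1 : f.comp (-X) = -f := by
    apply Polynomial.funext
    intro t
    simp [eval_comp, hodd]
  have heven : ∀ k, f.coeff (2 * k) = 0 := by
    intro k
    have h := congrArg (fun p => p.coeff (2 * k)) P1
    simp only [my_coeff_comp_neg_X, coeff_neg] at h
    rw [pow_mul] at h
    simp at h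
    have h2 : (2:K) * f.coeff (2*k) = 0 := by linear_combination h
    exact (mul_eq_zero.mp h2).resolve_left two_ne_zero
  -- the reflection identity
  have P2 : X * reflect (2 * g + 1) f = -f := by
    rw [← sub_eq_zero]
    apply Polynomial.eq_zero_of_infinite_isRoot
    apply Set.Infinite.mono (s := {t : K | t ≠ 0})
    · intro t ht
      simp only [Set.mem_setOf_eq] at ht
      have h1 := my_eval_reflect f (2*g+1) hdeg.le t ht
      have h2 := hrec t ht
      simp only [Set.mem_setOf_eq, IsRoot, eval_sub, eval_mul, eval_X, eval_neg]
      rw [h1]; linear_combination h2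
    · exact Set.infinite_of_finite_compl (by simp)
  have hsym : ∀ n, n ≤ 2*g + 1 → f.coeff (2*g+1-n) = - f.coeff (n+1) := by
    intro n hn
    have h := congrArg (fun p => p.coeff (n+1)) P2
    simp only [coeff_X_mul, coeff_neg, coeff_reflect] at h
    rwa [revAt_le hn] at h
  -- divisibility by X
  have d1 : (X : K[X]) ∣ f := X_dvd_iff.mpr (by simpa using heven 0)
  -- divisibility by X - 1
  have hev1 : f.eval 1 = 0 := by
    have h := hrec 1 one_ne_zero
    simp only [one_pow, inv_one, one_mul] at h
    have h2 : (2:K) * f.eval 1 = 0 := by linear_combination h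
    exact (mul_eq_zero.mp h2).resolve_left two_ne_zero
  have d2 : (X - C 1 : K[X]) ∣ f := dvd_iff_isRoot.mpr hev1
  -- divisibility by X + 1
  have d3 : (X + C 1 : K[X]) ∣ f := by
    have : (X + C 1 : K[X]) = X - C (-1) := by rw [map_neg, sub_neg_eq_add]
    rw [this]
    apply dvd_iff_isRoot.mpr
    show f.eval (-1) = 0
    rw [show (-1 : K) = -(1:K) by ring, hodd 1, hev1, neg_zero]
  -- divisibility by X^2 + 1
  have d4 : (X^2 + 1 : K[X]) ∣ f := by
    set A := AdjoinRoot (X^2 + 1 : K[X]) with hA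
    set r : A := AdjoinRoot.root _ with hr
    have hr2 : r^2 = -1 := by
      have h := AdjoinRoot.eval₂_root (X^2 + 1 : K[X])
      simp only [eval₂_add, eval₂_pow, eval₂_X, eval₂_one] at h
      linear_combination h
    set φ : K →+* A := algebraMap K A with hφ
    have S0 : ∑ j ∈ range (g+1), ((-1:K)^j * f.coeff (2*j+1)) = 0 := by
      set S := ∑ j ∈ range (g+1), ((-1:K)^j * f.coeff (2*j+1)) with hS
      have h2 : S + S = 0 := by
        nth_rewrite 2 [hS]
        rw [← Finset.sum_range_reflect _ (g+1), ← Finset.sum_add_distrib]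
        apply Finset.sum_eq_zero
        intro j hj
        simp only [mem_range] at hj
        have hj' : j ≤ g := by omega
        have e1 : 2*(g + 1 - 1 - j)+1 = 2*g+1 - 2*j := by omega
        have e2 := hsym (2*j) (by omega)
        simp only [e1, e2]
        have e3 : (-1:K)^(g + 1 - 1 - j) = (-1)^j := by
          rw [show g + 1 - 1 - j = g - j from rfl]
          rcases Nat.even_or_odd j with hj2 | hj2
          · rw [hj2.neg_one_pow]
            have : Even (g - j) := by
              obtain ⟨a, ha⟩ := hj2; exact ⟨gh - a, by omega⟩
            rw [this.neg_one_pow]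
          · rw [hj2.neg_one_pow]
            have : Odd (g - j) := by
              obtain ⟨a, ha⟩ := hj2; exact ⟨gh - a - 1, by omega⟩
            rw [this.neg_one_pow]
        rw [e3]; ring
      have h3 : (2:K) * S = 0 := by linear_combination h2
      exact (mul_eq_zero.mp h3).resolve_left two_ne_zero
    have haev : aeval r f = 0 := by
      rw [aeval_eq_sum_range' (n := 2*(g+1)) (by omega) r, my_sum_range_two_mul]
      have hterm : ∀ j ∈ range (g+1),
          (f.coeff (2*j) • r^(2*j) + f.coeff (2*j+1) • r^(2*j+1))
            = φ ((-1:K)^j * f.coeff (2*j+1)) * r := by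
        intro j hj
        rw [heven j, zero_smul, zero_add, Algebra.smul_def]
        have : r^(2*j+1) = φ ((-1:K)^j) * r := by
          rw [pow_succ, pow_mul, hr2, map_pow, map_neg, map_one]
        rw [this, map_mul]
        ring
      rw [Finset.sum_congr rfl hterm, ← Finset.sum_mul]
      rw [← map_sum φ _ (range (g+1)), S0]
      simp
    exact (AdjoinRoot.mk_eq_zero (f := (X^2+1 : K[X]))).mp
      (by rw [← AdjoinRoot.aeval_eq]; exact haev)
  -- combine into divisibility by X^5 - X
  have c23 : IsCoprime (X - C 1 : K[X]) (X + C 1) := by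
    refine ⟨-C (2⁻¹:K), C (2⁻¹:K), ?_⟩
    have h2 : (C (2⁻¹:K)) * C 2 = 1 := by
      rw [← C_mul, inv_mul_cancel₀ (two_ne_zero), C_1]
    rw [C_1]
    have hC2 : (C (2:K)) = (2 : K[X]) := map_ofNat C 2
    rw [hC2] at h2
    linear_combination h2
  have c24 : IsCoprime (X - C 1 : K[X]) (X^2 + 1) := by
    refine ⟨-C (2⁻¹:K) * (X + 1), C (2⁻¹:K), ?_⟩
    have h2 : (C (2⁻¹:K)) * C 2 = 1 := by
      rw [← C_mul, inv_mul_cancel₀ (two_ne_zero), C_1]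
    have hC2 : (C (2:K)) = (2 : K[X]) := map_ofNat C 2
    rw [hC2] at h2
    rw [C_1]
    linear_combination h2
  have c34 : IsCoprime (X + C 1 : K[X]) (X^2 + 1) := by
    refine ⟨-C (2⁻¹:K) * (X - 1), C (2⁻¹:K), ?_⟩
    have h2 : (C (2⁻¹:K)) * C 2 = 1 := by
      rw [← C_mul, inv_mul_cancel₀ (two_ne_zero), C_1]
    have hC2 : (C (2:K)) = (2 : K[X]) := map_ofNat C 2
    rw [hC2] at h2
    rw [C_1]
    linear_combination h2
  have c12 : IsCoprime (X : K[X]) (X - C 1) := ⟨1, -1, by rw [C_1]; ring⟩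
  have c13 : IsCoprime (X : K[X]) (X + C 1) := ⟨-1, 1, by rw [C_1]; ring⟩
  have c14 : IsCoprime (X : K[X]) (X^2 + 1) := ⟨-X, 1, by ring⟩
  have hdvd : (X * ((X - C 1) * ((X + C 1) * (X^2+1))) : K[X]) ∣ f :=
    (c12.mul_right (c13.mul_right c14)).mul_dvd d1
      ((c23.mul_right c24).mul_dvd d2 (c34.mul_dvd d3 d4))
  have hdvd5 : (X^5 - X : K[X]) ∣ f := by
    have e5 : (X * ((X - C 1) * ((X + C 1) * (X^2+1))) : K[X]) = X^5 - X := by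
      rw [C_1]; ring
    rwa [e5] at hdvd
  obtain ⟨q, hq⟩ := hdvd5
  -- properties of q
  have hnr : (X^5 - X : K[X]).natDegree = 5 := by compute_degree!
  have hr0 : (X^5 - X : K[X]) ≠ 0 := by
    intro h; rw [h] at hnr; simp at hnr
  have hq0 : q ≠ 0 := by rintro rfl; rw [mul_zero] at hq; exact hf0 hq
  have hnq : q.natDegree = 2*g - 4 := by
    have h := hdeg
    rw [hq, natDegree_mul hr0 hq0, hnr] at h
    omega
  -- q is even
  have hcompr : (X^5 - X : K[X]).comp (-X) = -(X^5 - X) := by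
    simp only [sub_comp, pow_comp, neg_comp, X_comp]
    ring
  have hqcomp : q.comp (-X) = q := by
    apply mul_left_cancel₀ hr0
    have h := P1
    rw [hq, mul_comp, hcompr] at h
    linear_combination -h
  have qodd : ∀ k, q.coeff (2*k+1) = 0 := by
    intro k
    have h := congrArg (fun p => p.coeff (2*k+1)) hqcomp
    simp only [my_coeff_comp_neg_X] at h
    have hOdd : Odd (2*k+1) := ⟨k, by ring⟩
    rw [hOdd.neg_one_pow] at h
    have h2 : (2:K) * q.coeff (2*k+1) = 0 := by linear_combination -h
    exact (mul_eq_zero.mp h2).resolve_left two_ne_zero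
  -- q is self-reciprocal
  have hreflr : reflect 5 (X^5 - X : K[X]) = 1 - X^4 := by
    have e : (X^5 - X : K[X]) = X^5 - X^1 := by ring
    rw [e, reflect_sub, reflect_monomial, reflect_monomial,
      revAt_le (by norm_num), revAt_le (by norm_num)]
    norm_num
  have qsym : reflect (2*g-4) q = q := by
    apply mul_left_cancel₀ (neg_ne_zero.mpr hr0)
    have h := P2
    rw [hq, show 2*g+1 = 5 + (2*g-4) by omega,
      reflect_mul _ _ hnr.le hnq.le, hreflr] at h
    linear_combination h
  have csym : ∀ n, n ≤ 2*g-4 → q.coeff (2*g-4-n) = q.coeff n := by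
    intro n hn
    have h := congrArg (fun p => p.coeff n) qsym
    simp only [coeff_reflect] at h
    rwa [revAt_le hn] at h
  have hlcq : q.coeff (2*g - 4) = q.coeff 0 := by
    have := csym 0 (by omega)
    simpa using this
  have hc0 : q.coeff 0 ≠ 0 := by
    have h := Polynomial.leadingCoeff_ne_zero.mpr hq0
    rw [leadingCoeff, hnq, hlcq] at h
    exact h
  -- define the constants
  set c0 := q.coeff 0 with hc0def
  set c : K := c0 / (if g = 2 then 2 else 1) with hcdef
  set a : ℕ → K := fun j => q.coeff (2*j) / ((if 2*j = g-2 then 2 else 1) * c0) with hadef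
  refine ⟨c, a, ?_⟩
  have hcne : c ≠ 0 := by
    rw [hcdef]
    split_ifs
    · exact div_ne_zero hc0 two_ne_zero
    · simpa using hc0
  -- main claim
  have hmain : q = C c * (X ^ (2 * g - 4) + 1 +
      ∑ j ∈ Finset.Icc 1 (g / 2 - 1),
        C (a j) * (X ^ (2 * g - 4 - 2 * j) + X ^ (2 * j))) := by
    apply Polynomial.ext
    intro n
    simp only [coeff_C_mul, coeff_add, coeff_X_pow, coeff_one, finset_sum_coeff]
    rcases Nat.even_or_odd n with ⟨m, hm⟩ | hoddn
    · -- n even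
      have hm2 : n = 2*m := by omega
      subst hm2
      have hterm : ∀ j ∈ Finset.Icc 1 (g/2 - 1),
          a j * ((if 2*m = 2*g-4-2*j then (1:K) else 0) + (if 2*m = 2*j then 1 else 0))
            = (if j = g-2-m then a j else 0) + (if j = m then a j else 0) := by
        intro j hj
        simp only [mem_Icc] at hj
        have e1 : (2*m = 2*g-4-2*j) = (j = g-2-m) := propext (by
          constructor <;> intro h <;> omega)
        have e2 : (2*m = 2*j) = (j = m) := propext (by
          constructor <;> intro h <;> omega)
        simp only [e1, e2]
        split_ifs with hc1 hc2 <;> ring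
      rw [Finset.sum_congr rfl hterm, Finset.sum_add_distrib,
        Finset.sum_ite_eq' (Finset.Icc 1 (g/2-1)) (g-2-m) a,
        Finset.sum_ite_eq' (Finset.Icc 1 (g/2-1)) m a]
      simp only [mem_Icc]
      rcases Nat.eq_zero_or_pos m with rfl | hm1
      · -- m = 0
        have i3 : ¬(1 ≤ g-2-0 ∧ g-2-0 ≤ g/2-1) := by omega
        have i4 : ¬(1 ≤ 0 ∧ 0 ≤ g/2-1) := by omega
        have i2 : 2*0 = 0 := by omega
        rw [if_neg i3, if_neg i4, if_pos i2]
        rcases eq_or_ne g 2 with hg | hg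
        · have i1 : 2*0 = 2*g-4 := by omega
          rw [if_pos i1, hcdef, if_pos hg, show (2*0 : ℕ) = 0 by omega,
            show (1:K) + 1 + (0 + 0) = 2 by norm_num,
            div_mul_cancel₀ _ (two_ne_zero)]
        · have i1 : ¬(2*0 = 2*g-4) := by omega
          rw [if_neg i1, hcdef, if_neg hg, show (2*0 : ℕ) = 0 by omega,
            show (0:K) + 1 + (0 + 0) = 1 by norm_num, div_one, mul_one]
      · rcases lt_trichotomy m (g-2) with hmlt | hmeq | hmgt
        · -- 1 ≤ m ≤ g - 3, so g ≥ 4 and c = c0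
          have hg4 : 4 ≤ g := by omega
          have hgne : g ≠ 2 := by omega
          have hcc : c = c0 := by rw [hcdef, if_neg hgne, div_one]
          have i1 : ¬(2*m = 2*g-4) := by omega
          have i2 : ¬(2*m = 0) := by omega
          rw [if_neg i1, if_neg i2, hcc]
          rcases lt_trichotomy m (g/2 - 1) with hA | hB | hC
          · -- m < g/2 - 1
            have i3 : ¬(1 ≤ g-2-m ∧ g-2-m ≤ g/2-1) := by omega
            have i4 : (1 ≤ m ∧ m ≤ g/2-1) := by omega
            rw [if_neg i3, if_pos i4, hadef]
            simp only []
            rw [if_neg (show ¬(2*m = g-2) by omega), one_mul]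
            field_simp
            ring
          · -- m = g/2 - 1, i.e. 2m = g-2
            have i3 : (1 ≤ g-2-m ∧ g-2-m ≤ g/2-1) := by omega
            have i4 : (1 ≤ m ∧ m ≤ g/2-1) := by omega
            have hgm : g - 2 - m = m := by omega
            rw [if_pos i3, if_pos i4, hgm, hadef]
            simp only []
            rw [if_pos (show 2*m = g-2 by omega)]
            field_simp
            ring
          · -- m > g/2 - 1
            have i3 : (1 ≤ g-2-m ∧ g-2-m ≤ g/2-1) := by omega
            have i4 : ¬(1 ≤ m ∧ m ≤ g/2-1) := by omega
            rw [if_pos i3, if_neg i4, hadef]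
            simp only []
            rw [if_neg (show ¬(2*(g-2-m) = g-2) by omega), one_mul]
            have hsy := csym (2*m) (by omega)
            have e : 2*(g-2-m) = 2*g-4-2*m := by omega
            rw [e, hsy]
            field_simp
            ring
        · -- m = g - 2 (so g ≥ 4 since m ≥ 1 and g even)
          have hg4 : 4 ≤ g := by omega
          have hgne : g ≠ 2 := by omega
          have hcc : c = c0 := by rw [hcdef, if_neg hgne, div_one]
          have i1 : 2*m = 2*g-4 := by omega
          have i2 : ¬(2*m = 0) := by omega
          have i3 : ¬(1 ≤ g-2-m ∧ g-2-m ≤ g/2-1) := by omega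
          have i4 : ¬(1 ≤ m ∧ m ≤ g/2-1) := by omega
          rw [if_pos i1, if_neg i2, if_neg i3, if_neg i4, hcc,
            show 2*m = 2*g-4 by omega, hlcq]
          ring
        · -- m > g - 2 : both sides vanish
          have i1 : ¬(2*m = 2*g-4) := by omega
          have i2 : ¬(2*m = 0) := by omega
          have i3 : ¬(1 ≤ g-2-m ∧ g-2-m ≤ g/2-1) := by omega
          have i4 : ¬(1 ≤ m ∧ m ≤ g/2-1) := by omega
          rw [if_neg i1, if_neg i2, if_neg i3, if_neg i4]
          rw [coeff_eq_zero_of_natDegree_lt (by omega : q.natDegree < 2*m)]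
          ring
    · -- n odd
      obtain ⟨k, hk⟩ := hoddn
      subst hk
      rw [qodd k, if_neg (show ¬(2*k+1 = 2*g-4) by omega),
        if_neg (show ¬(2*k+1 = 0) by omega), Finset.sum_eq_zero]
      · ring
      · intro j hj
        simp only [mem_Icc] at hj
        rw [if_neg (show ¬(2*k+1 = 2*g-4-2*j) by omega),
          if_neg (show ¬(2*k+1 = 2*j) by omega)]
        ring
  rw [hq, hmain]
  ring
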